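/- Let q ≥ 1, α > 0, and let φ : [0,∞) → ℝ^q be continuous and bounded. Define the Kreisselmeier extended regressor Φ(t) = ∫₀ᵗ e^{−α(t−s)}·φ(s)·φ(s)ᵀ ds ∈ ℝ^{q×q} and Δ(t) = det Φ(t). If φ is (t₀,t_c,μ)-IE for some t₀ ≥ 0, t_c > 0 and μ > 0, then Δ is interval exciting: there exist t₀' ≥ 0, t_c' > 0 and μ' > 0 such that ∫_{t₀'}^{t₀'+t_c'} Δ(s)² ds ≥ μ'. -/

import Mathlib

open MeasureTheory

/-- The matrix `∫_a^b φ(s) φ(s)ᵀ ds`, defined entrywise. -/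
noncomputable def gramOn (q : ℕ) (φ : ℝ → Fin q → ℝ) (a b : ℝ) :
    Matrix (Fin q) (Fin q) ℝ :=
  Matrix.of fun i j => ∫ s in a..b, φ s i * φ s j

/-- The Kreisselmeier extended regressor
`Φ(t) = ∫₀ᵗ e^{-α(t-s)} φ(s) φ(s)ᵀ ds`, defined entrywise. -/
noncomputable def kreisselmeierPhi (q : ℕ) (α : ℝ) (φ : ℝ → Fin q → ℝ) (t : ℝ) :
    Matrix (Fin q) (Fin q) ℝ :=
  Matrix.of fun i j => ∫ s in (0:ℝ)..t, Real.exp (-α * (t - s)) * (φ s i * φ s j)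

/-- Quadratic form of a weighted Gram-type matrix equals a single integral. -/
lemma quad_eq (q : ℕ) (φ : ℝ → Fin q → ℝ) (hφc : Continuous φ)
    (w : ℝ → ℝ) (hw : Continuous w) (a b : ℝ) (x : Fin q → ℝ) :
    dotProduct x (Matrix.mulVec (Matrix.of fun i j => ∫ s in a..b, w s * (φ s i * φ s j)) x)
      = ∫ s in a..b, w s * (∑ i, φ s i * x i) ^ 2 := by
  have hφi : ∀ i : Fin q, Continuous fun s => φ s i :=
    fun i => (continuous_apply i).comp hφc
  have hint : ∀ i j : Fin q,
      IntervalIntegrable (fun s => x i * (w s * (φ s i * φ s j) * x j)) volume a b :=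
    fun i j => (continuous_const.mul
      ((hw.mul ((hφi i).mul (hφi j))).mul continuous_const)).intervalIntegrable a b
  simp only [dotProduct, Matrix.mulVec, Matrix.of_apply]
  have h1 : ∀ i : Fin q,
      x i * ∑ j, (∫ s in a..b, w s * (φ s i * φ s j)) * x j
        = ∫ s in a..b, ∑ j, x i * (w s * (φ s i * φ s j) * x j) := by
    intro i
    have h3 := intervalIntegral.integral_finset_sum (μ := MeasureTheory.volume)
      (a := a) (b := b) (s := Finset.univ)
      (f := fun j s => x i * (w s * (φ s i * φ s j) * x j)) (fun j _ => hint i j)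
    rw [h3, Finset.mul_sum]
    refine Finset.sum_congr rfl fun j _ => ?_
    rw [← intervalIntegral.integral_mul_const, ← intervalIntegral.integral_const_mul]
  simp only [h1]
  have h2 := intervalIntegral.integral_finset_sum (μ := MeasureTheory.volume)
    (a := a) (b := b) (s := Finset.univ)
    (f := fun i s => ∑ j, x i * (w s * (φ s i * φ s j) * x j))
    (fun i _ => (continuous_finset_sum _ (fun j _ => continuous_const.mul
      ((hw.mul ((hφi i).mul (hφi j))).mul continuous_const))).intervalIntegrable a b)
  rw [← h2]
  apply intervalIntegral.integral_congr
  intro s _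
  show (∑ i, ∑ j, x i * (w s * (φ s i * φ s j) * x j))
      = w s * (∑ i, φ s i * x i) ^ 2
  rw [sq, Finset.sum_mul_sum, Finset.mul_sum]
  refine Finset.sum_congr rfl fun i _ => ?_
  rw [Finset.mul_sum]
  refine Finset.sum_congr rfl fun j _ => ?_
  ring

lemma phiK_cont (q : ℕ) (α : ℝ) (φ : ℝ → Fin q → ℝ) (hφc : Continuous φ) :
    Continuous fun t => kreisselmeierPhi q α φ t := by
  have hφi : ∀ i : Fin q, Continuous fun s => φ s i :=
    fun i => (continuous_apply i).comp hφc
  apply continuous_matrix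
  intro i j
  have hg : Continuous fun s => Real.exp (α * s) * (φ s i * φ s j) :=
    (Real.continuous_exp.comp (continuous_const.mul continuous_id)).mul
      ((hφi i).mul (hφi j))
  have key : (fun t => kreisselmeierPhi q α φ t i j)
      = fun t => Real.exp (-α * t) *
          ∫ s in (0:ℝ)..t, Real.exp (α * s) * (φ s i * φ s j) := by
    funext t
    show (∫ s in (0:ℝ)..t, Real.exp (-α * (t - s)) * (φ s i * φ s j)) = _
    rw [← intervalIntegral.integral_const_mul]
    apply intervalIntegral.integral_congr
    intro s _
    show Real.exp (-α * (t - s)) * (φ s i * φ s j)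
        = Real.exp (-α * t) * (Real.exp (α * s) * (φ s i * φ s j))
    have hE : Real.exp (-α * t) * Real.exp (α * s) = Real.exp (-α * (t - s)) := by
      rw [← Real.exp_add]; congr 1; ring
    rw [← hE, mul_assoc]
  rw [key]
  exact (Real.continuous_exp.comp (continuous_const.mul continuous_id)).mul
    (intervalIntegral.continuous_primitive (fun a b => hg.intervalIntegrable a b) 0)

/-- Result R2: If `φ` is `(t₀,t_c,μ)`-IE then `Δ = det Φ` is
interval exciting. -/
theorem kreisselmeier_ie_implies_det_ie (q : ℕ) (hq : 1 ≤ q) (α : ℝ)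
    (hα : 0 < α) (φ : ℝ → Fin q → ℝ) (hφc : Continuous φ)
    (hφb : ∃ C, ∀ t, 0 ≤ t → ‖φ t‖ ≤ C)
    (t₀ tc μ : ℝ) (ht₀ : 0 ≤ t₀) (htc : 0 < tc) (hμ : 0 < μ)
    (hIE : (gramOn q φ t₀ (t₀ + tc)
            - μ • (1 : Matrix (Fin q) (Fin q) ℝ)).PosSemidef) :
    ∃ t₀' ≥ (0:ℝ), ∃ tc' > (0:ℝ), ∃ μ' > (0:ℝ),
      μ' ≤ ∫ s in t₀'..t₀' + tc', ((kreisselmeierPhi q α φ s).det) ^ 2 := by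
  set t₁ : ℝ := t₀ + tc with ht₁def
  have ht₁0 : 0 ≤ t₁ := by positivity
  have ht₀t₁ : t₀ ≤ t₁ := by simp [ht₁def]; linarith
  have hφi : ∀ i : Fin q, Continuous fun s => φ s i :=
    fun i => (continuous_apply i).comp hφc
  -- positive definiteness of Φ(t₁)
  have hPD : (kreisselmeierPhi q α φ t₁).PosDef := by
    rw [Matrix.posDef_iff_dotProduct_mulVec]
    constructor
    · -- Hermitian
      ext i j
      simp only [kreisselmeierPhi, Matrix.conjTranspose_apply, Matrix.of_apply,
        star_trivial]
      apply intervalIntegral.integral_congr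
      intro s _
      ring
    · intro x hx
      have hstar : (star x : Fin q → ℝ) = x := by simp
      rw [hstar]
      set c : ℝ → ℝ := fun s => ∑ i, φ s i * x i with hc
      have hcc : Continuous c := continuous_finset_sum _ fun i _ => (hφi i).mul continuous_const
      have hw : Continuous fun s => Real.exp (-α * (t₁ - s)) :=
        Real.continuous_exp.comp (by fun_prop)
      have hquad : dotProduct x (Matrix.mulVec (kreisselmeierPhi q α φ t₁) x)
          = ∫ s in (0:ℝ)..t₁, Real.exp (-α * (t₁ - s)) * (c s) ^ 2 :=
        quad_eq q φ hφc _ hw 0 t₁ x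
      rw [hquad]
      -- the Gram quadratic form
      have hGram : dotProduct x (Matrix.mulVec (gramOn q φ t₀ t₁) x) = ∫ s in t₀..t₁, (c s) ^ 2 := by
        have : gramOn q φ t₀ t₁
            = Matrix.of fun i j => ∫ s in t₀..t₁, (fun _ : ℝ => (1:ℝ)) s * (φ s i * φ s j) := by
          unfold gramOn; ext i j; simp
        rw [this, quad_eq q φ hφc _ continuous_const t₀ t₁ x]
        simp [hc]
      have hxx : 0 < dotProduct x x := by
        rcases lt_or_eq_of_le (dotProduct_self_star_nonneg x) with h | h
        · simpa using h
        · exact absurd (dotProduct_self_eq_zero.mp (by simpa using h.symm)) hx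
      have hμx : μ * dotProduct x x ≤ ∫ s in t₀..t₁, (c s) ^ 2 := by
        have h0 := (Matrix.posSemidef_iff_dotProduct_mulVec.mp hIE).2 x
        rw [hstar] at h0
        rw [Matrix.sub_mulVec, dotProduct_sub, Matrix.smul_mulVec,
          Matrix.one_mulVec, dotProduct_smul, smul_eq_mul, hGram] at h0
        linarith
      have hintw : IntervalIntegrable (fun s => Real.exp (-α * (t₁ - s)) * (c s) ^ 2)
          volume 0 t₀ := (hw.mul (hcc.pow 2)).intervalIntegrable 0 t₀
      have hintw2 : IntervalIntegrable (fun s => Real.exp (-α * (t₁ - s)) * (c s) ^ 2)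
          volume t₀ t₁ := (hw.mul (hcc.pow 2)).intervalIntegrable t₀ t₁
      have hsplit : (∫ s in (0:ℝ)..t₁, Real.exp (-α * (t₁ - s)) * (c s) ^ 2)
          = (∫ s in (0:ℝ)..t₀, Real.exp (-α * (t₁ - s)) * (c s) ^ 2)
            + ∫ s in t₀..t₁, Real.exp (-α * (t₁ - s)) * (c s) ^ 2 :=
        (intervalIntegral.integral_add_adjacent_intervals hintw hintw2).symm
      have h1 : 0 ≤ ∫ s in (0:ℝ)..t₀, Real.exp (-α * (t₁ - s)) * (c s) ^ 2 :=
        intervalIntegral.integral_nonneg ht₀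
          (fun s _ => mul_nonneg (Real.exp_pos _).le (sq_nonneg _))
      have h2 : (∫ s in t₀..t₁, Real.exp (-α * t₁) * (c s) ^ 2)
          ≤ ∫ s in t₀..t₁, Real.exp (-α * (t₁ - s)) * (c s) ^ 2 := by
        apply intervalIntegral.integral_mono_on ht₀t₁
          ((continuous_const.mul (hcc.pow 2)).intervalIntegrable t₀ t₁) hintw2
        intro s hs
        have hs0 : 0 ≤ s := le_trans ht₀ hs.1
        exact mul_le_mul_of_nonneg_right
          (Real.exp_le_exp.mpr (by nlinarith)) (sq_nonneg _)
      have h3 : (∫ s in t₀..t₁, Real.exp (-α * t₁) * (c s) ^ 2)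
          = Real.exp (-α * t₁) * ∫ s in t₀..t₁, (c s) ^ 2 :=
        intervalIntegral.integral_const_mul _ _
      have hfin : 0 < Real.exp (-α * t₁) * (μ * dotProduct x x) := by positivity
      calc (0:ℝ) < Real.exp (-α * t₁) * (μ * dotProduct x x) := hfin
        _ ≤ Real.exp (-α * t₁) * ∫ s in t₀..t₁, (c s) ^ 2 :=
            mul_le_mul_of_nonneg_left hμx (Real.exp_pos _).le
        _ ≤ ∫ s in t₀..t₁, Real.exp (-α * (t₁ - s)) * (c s) ^ 2 := by rw [← h3]; exact h2
        _ ≤ ∫ s in (0:ℝ)..t₁, Real.exp (-α * (t₁ - s)) * (c s) ^ 2 := by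
            rw [hsplit]; linarith
  have hdet : 0 < (kreisselmeierPhi q α φ t₁).det := hPD.det_pos
  set f : ℝ → ℝ := fun t => (kreisselmeierPhi q α φ t).det ^ 2 with hf
  have hfc : Continuous f := ((phiK_cont q α φ hφc).matrix_det).pow 2
  set C : ℝ := f t₁ with hC
  have hCpos : 0 < C := by
    simp only [hC, hf]
    positivity
  obtain ⟨δ, hδ, hball⟩ := Metric.continuousAt_iff.mp ((hfc.continuousAt) : ContinuousAt f t₁) (C/2)
    (by positivity)
  refine ⟨t₁, ht₁0, δ/2, by positivity, (δ/2) * (C/2), by positivity, ?_⟩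
  have hlow : ∀ s ∈ Set.Icc t₁ (t₁ + δ/2), C/2 ≤ f s := by
    intro s hs
    have hd : dist s t₁ < δ := by
      rw [Real.dist_eq, abs_lt]
      constructor <;> [linarith [hs.1]; linarith [hs.2]]
    have := hball hd
    rw [Real.dist_eq, abs_lt] at this
    linarith [this.1]
  have hmono : (∫ s in t₁..t₁ + δ/2, (C/2)) ≤ ∫ s in t₁..t₁ + δ/2, f s :=
    intervalIntegral.integral_mono_on (by linarith) (intervalIntegrable_const)
      (hfc.intervalIntegrable _ _) hlow
  rw [intervalIntegral.integral_const, smul_eq_mul] at hmono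
  calc (δ/2) * (C/2) = (t₁ + δ/2 - t₁) * (C/2) := by ring_nf
    _ ≤ ∫ s in t₁..t₁ + δ/2, f s := hmono
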